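/- arXiv:1410.7558 — 3 statements merged into one kernel-verified Lean document; each statement's English description precedes it below -/
import Mathlib

section
/- For every choice of bounds Ā, Ē, r̄, M ≥ 0 there exists a constant K ≥ 0 with the following property: whenever A, A' : [0,T] → ℝ^{d×d}, r, r' : [0,T] → ℝ^d, Y, Y' : [0,T] → ℝ^{d'} are continuous with sup_t ‖A(t)‖, sup_t ‖A'(t)‖ ≤ Ā, sup_t ‖r(t)‖, sup_t ‖r'(t)‖ ≤ r̄, and (∫₀ᵀ‖Y‖²)^{1/2}, (∫₀ᵀ‖Y'‖²)^{1/2} ≤ M, and E, E' are solutions of the Riccati ODE for the respective coefficients A, A' with E(0) = E'(0) = Q and sup_t ‖E(t)‖, sup_t ‖E'(t)‖ ≤ Ē, and h, h' are the corresponding adjoint solutions for the data (A, E, r, Y) and (A', E', r', Y') respectively, then for every t ∈ [0,T]: ‖h(t) − h'(t)‖ ≤ K · ((∫₀ᵀ ‖Y(s) − Y'(s)‖² ds)^{1/2} + sup_t ‖A(t) − A'(t)‖ + sup_t ‖r(t) − r'(t)‖). -/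
open Matrix Set intervalIntegral
open scoped Matrix

noncomputable section

def frob {m n : Type*} [Fintype m] [Fintype n] (M : Matrix m n ℝ) : ℝ :=
  Real.sqrt (∑ i, ∑ j, (M i j) ^ 2)

def evnorm {n : Type*} [Fintype n] (v : n → ℝ) : ℝ :=
  Real.sqrt (∑ i, (v i) ^ 2)

section Helpers

def toEuc {ι : Type*} [Fintype ι] (v : ι → ℝ) : EuclideanSpace ℝ ι :=
  (WithLp.equiv 2 (ι → ℝ)).symm v

lemma toEuc_apply {ι : Type*} [Fintype ι] (v : ι → ℝ) (i : ι) : toEuc v i = v i := rfl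

lemma norm_toEuc {ι : Type*} [Fintype ι] (v : ι → ℝ) : ‖toEuc v‖ = evnorm v := by
  rw [EuclideanSpace.norm_eq, evnorm]
  congr 1
  refine Finset.sum_congr rfl fun i _ => ?_
  rw [toEuc_apply, Real.norm_eq_abs, sq_abs]

lemma toEuc_sub {ι : Type*} [Fintype ι] (v w : ι → ℝ) : toEuc (v - w) = toEuc v - toEuc w := rfl

lemma toEuc_add {ι : Type*} [Fintype ι] (v w : ι → ℝ) : toEuc (v + w) = toEuc v + toEuc w := rfl

lemma evnorm_nonneg {ι : Type*} [Fintype ι] (v : ι → ℝ) : 0 ≤ evnorm v := Real.sqrt_nonneg _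

lemma frob_nonneg {m n : Type*} [Fintype m] [Fintype n] (M : Matrix m n ℝ) : 0 ≤ frob M :=
  Real.sqrt_nonneg _

lemma evnorm_add_le {ι : Type*} [Fintype ι] (v w : ι → ℝ) :
    evnorm (v + w) ≤ evnorm v + evnorm w := by
  rw [← norm_toEuc, ← norm_toEuc, ← norm_toEuc, toEuc_add]; exact norm_add_le _ _

lemma evnorm_neg {ι : Type*} [Fintype ι] (v : ι → ℝ) : evnorm (-v) = evnorm v := by
  have : toEuc (-v) = -(toEuc v) := rfl
  rw [← norm_toEuc, ← norm_toEuc, this, norm_neg]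

lemma evnorm_sub_le {ι : Type*} [Fintype ι] (v w : ι → ℝ) :
    evnorm (v - w) ≤ evnorm v + evnorm w := by
  rw [sub_eq_add_neg]
  exact (evnorm_add_le _ _).trans (by rw [evnorm_neg])

lemma evnorm_neg_sub_le {ι : Type*} [Fintype ι] (v w : ι → ℝ) :
    evnorm (-v - w) ≤ evnorm v + evnorm w := by
  have h : -v - w = -(v + w) := by abel
  rw [h, evnorm_neg]; exact evnorm_add_le _ _

lemma evnorm_smul {ι : Type*} [Fintype ι] (c : ℝ) (v : ι → ℝ) :
    evnorm (c • v) = |c| * evnorm v := by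
  have : toEuc (c • v) = c • toEuc v := rfl
  rw [← norm_toEuc, this, norm_smul, Real.norm_eq_abs, norm_toEuc]

def mEuc {m n : Type*} [Fintype m] [Fintype n] (M : Matrix m n ℝ) : EuclideanSpace ℝ (m × n) :=
  toEuc (fun p => M p.1 p.2)

lemma frob_eq_norm {m n : Type*} [Fintype m] [Fintype n] (M : Matrix m n ℝ) :
    frob M = ‖mEuc M‖ := by
  rw [mEuc, norm_toEuc, evnorm, frob, Fintype.sum_prod_type]

lemma frob_add_le {m n : Type*} [Fintype m] [Fintype n] (M N : Matrix m n ℝ) :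
    frob (M + N) ≤ frob M + frob N := by
  have : mEuc (M + N) = mEuc M + mEuc N := rfl
  rw [frob_eq_norm, frob_eq_norm, frob_eq_norm, this]; exact norm_add_le _ _

lemma frob_neg {m n : Type*} [Fintype m] [Fintype n] (M : Matrix m n ℝ) : frob (-M) = frob M := by
  have : mEuc (-M) = -(mEuc M) := rfl
  rw [frob_eq_norm, frob_eq_norm, this, norm_neg]

lemma frob_sub_le {m n : Type*} [Fintype m] [Fintype n] (M N : Matrix m n ℝ) :
    frob (M - N) ≤ frob M + frob N := by
  rw [sub_eq_add_neg]
  exact (frob_add_le _ _).trans (by rw [frob_neg])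

lemma frob_neg_sub_le {m n : Type*} [Fintype m] [Fintype n] (M N : Matrix m n ℝ) :
    frob (-M - N) ≤ frob M + frob N := by
  have h : -M - N = -(M + N) := by abel
  rw [h, frob_neg]; exact frob_add_le _ _

lemma frob_smul {m n : Type*} [Fintype m] [Fintype n] (c : ℝ) (M : Matrix m n ℝ) :
    frob (c • M) = |c| * frob M := by
  have : mEuc (c • M) = c • mEuc M := rfl
  rw [frob_eq_norm, frob_eq_norm, this, norm_smul, Real.norm_eq_abs]

lemma frob_transpose {m n : Type*} [Fintype m] [Fintype n] (M : Matrix m n ℝ) :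
    frob Mᵀ = frob M := by
  rw [frob, frob, Finset.sum_comm]
  rfl

lemma evnorm_mulVec_le {m n : Type*} [Fintype m] [Fintype n] (M : Matrix m n ℝ) (v : n → ℝ) :
    evnorm (M.mulVec v) ≤ frob M * evnorm v := by
  have key : ∑ i, (M.mulVec v i) ^ 2 ≤ (∑ i, ∑ j, (M i j) ^ 2) * ∑ j, (v j) ^ 2 := by
    rw [Finset.sum_mul]
    refine Finset.sum_le_sum fun i _ => ?_
    exact Finset.sum_mul_sq_le_sq_mul_sq _ _ _
  calc evnorm (M.mulVec v) = Real.sqrt (∑ i, (M.mulVec v i) ^ 2) := rfl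
    _ ≤ Real.sqrt ((∑ i, ∑ j, (M i j) ^ 2) * ∑ j, (v j) ^ 2) := Real.sqrt_le_sqrt key
    _ = frob M * evnorm v := by
        rw [Real.sqrt_mul (by positivity)]; rfl

lemma frob_mul_le {m n p : Type*} [Fintype m] [Fintype n] [Fintype p]
    (M : Matrix m n ℝ) (N : Matrix n p ℝ) : frob (M * N) ≤ frob M * frob N := by
  have key : ∑ i, ∑ j, ((M * N) i j) ^ 2 ≤
      (∑ i, ∑ k, (M i k) ^ 2) * (∑ k, ∑ j, (N k j) ^ 2) := by
    have h1 : ∀ (i : m) (j : p), ((M * N) i j) ^ 2 ≤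
        (∑ k, (M i k) ^ 2) * (∑ k, (N k j) ^ 2) := by
      intro i j
      rw [Matrix.mul_apply]
      exact Finset.sum_mul_sq_le_sq_mul_sq _ _ _
    calc ∑ i, ∑ j, ((M * N) i j) ^ 2
        ≤ ∑ i, ∑ j, (∑ k, (M i k) ^ 2) * (∑ k, (N k j) ^ 2) :=
          Finset.sum_le_sum fun i _ => Finset.sum_le_sum fun j _ => h1 i j
      _ = (∑ i, ∑ k, (M i k) ^ 2) * (∑ k, ∑ j, (N k j) ^ 2) := by
          rw [Finset.sum_mul]
          refine Finset.sum_congr rfl fun i _ => ?_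
          rw [← Finset.mul_sum, Finset.sum_comm (γ := p)]
  calc frob (M * N) = Real.sqrt (∑ i, ∑ j, ((M * N) i j) ^ 2) := rfl
    _ ≤ Real.sqrt ((∑ i, ∑ k, (M i k) ^ 2) * (∑ k, ∑ j, (N k j) ^ 2)) := Real.sqrt_le_sqrt key
    _ = frob M * frob N := by rw [Real.sqrt_mul (by positivity)]; rfl

lemma hasDerivAt_toEuc {ι : Type*} [Fintype ι] {f : ℝ → ι → ℝ} {v : ι → ℝ} {t : ℝ}
    (hc : ∀ i, HasDerivAt (fun s => f s i) (v i) t) :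
    HasDerivAt (fun s => toEuc (f s)) (toEuc v) t := by
  have h1 : HasDerivAt f v t := hasDerivAt_pi.2 hc
  have := ((EuclideanSpace.equiv ι ℝ).symm.toContinuousLinearMap.hasFDerivAt
    (x := f t)).comp_hasDerivAt t h1
  exact this

lemma continuous_evnorm_comp {n : Type*} [Fintype n] {v : ℝ → n → ℝ}
    (hv : ∀ i, Continuous fun s => v s i) : Continuous fun s => evnorm (v s) := by
  unfold evnorm
  exact Real.continuous_sqrt.comp (continuous_finset_sum _ fun i _ => (hv i).pow 2)

lemma cs_int {g : ℝ → ℝ} (hg : Continuous g) (hg0 : ∀ s, 0 ≤ g s) {T : ℝ} (hT : 0 < T) :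
    ∫ s in (0:ℝ)..T, g s ≤ Real.sqrt T * Real.sqrt (∫ s in (0:ℝ)..T, (g s) ^ 2) := by
  set I := ∫ s in (0:ℝ)..T, g s with hI
  set J := ∫ s in (0:ℝ)..T, (g s) ^ 2 with hJ
  have hIg : IntervalIntegrable g MeasureTheory.volume 0 T := hg.intervalIntegrable _ _
  have hIg2 : IntervalIntegrable (fun s => (g s) ^ 2) MeasureTheory.volume 0 T :=
    (hg.pow 2).intervalIntegrable _ _
  have hI0 : 0 ≤ I := intervalIntegral.integral_nonneg hT.le fun s _ => hg0 s
  have hJ0 : 0 ≤ J := intervalIntegral.integral_nonneg hT.le fun s _ => sq_nonneg _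
  have expand : ∫ s in (0:ℝ)..T, (T * g s - I) ^ 2 = T ^ 2 * J - T * I ^ 2 := by
    have hptw : ∀ s, (T * g s - I) ^ 2 = T ^ 2 * (g s) ^ 2 - (2 * T * I) * g s + I ^ 2 := by
      intro s; ring
    rw [intervalIntegral.integral_congr (g := fun s => T ^ 2 * (g s) ^ 2 - (2 * T * I) * g s + I ^ 2)
      (fun s _ => hptw s)]
    rw [intervalIntegral.integral_add ((hIg2.const_mul _).sub (hIg.const_mul _))
      intervalIntegrable_const]
    rw [intervalIntegral.integral_sub (hIg2.const_mul _) (hIg.const_mul _)]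
    rw [intervalIntegral.integral_const_mul, intervalIntegral.integral_const_mul,
      intervalIntegral.integral_const]
    simp only [← hI, ← hJ, sub_zero, smul_eq_mul]
    ring
  have hnn : 0 ≤ T ^ 2 * J - T * I ^ 2 := by
    rw [← expand]
    exact intervalIntegral.integral_nonneg hT.le fun s _ => sq_nonneg _
  have hsq : I ^ 2 ≤ T * J := by nlinarith
  calc I = Real.sqrt (I ^ 2) := by rw [Real.sqrt_sq hI0]
    _ ≤ Real.sqrt (T * J) := Real.sqrt_le_sqrt hsq
    _ = Real.sqrt T * Real.sqrt J := Real.sqrt_mul hT.le _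

lemma gronwall_aux {F : Type*} [NormedAddCommGroup F] [NormedSpace ℝ F]
    {f f' : ℝ → F} {w : ℝ → ℝ} {T L δ : ℝ} (hT : 0 < T) (hL : 0 ≤ L) (hδ : 0 ≤ δ)
    (hf : ∀ t ∈ Icc (0:ℝ) T, HasDerivAt f (f' t) t)
    (hw : Continuous w) (hw0 : ∀ s, 0 ≤ w s)
    (h0 : ‖f 0‖ ≤ δ)
    (hbound : ∀ t ∈ Icc (0:ℝ) T, ‖f' t‖ ≤ L * ‖f t‖ + w t) :
    ∀ t ∈ Icc (0:ℝ) T, ‖f t‖ ≤ Real.exp (L * T) * (δ + ∫ s in (0:ℝ)..T, w s) := by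
  set I : ℝ → ℝ := fun u => ∫ s in (0:ℝ)..u, w s with hIdef
  have hI : ∀ t : ℝ, HasDerivAt I (w t) t := fun t =>
    intervalIntegral.integral_hasDerivAt_right (hw.intervalIntegrable _ _)
      (hw.stronglyMeasurable.stronglyMeasurableAtFilter) hw.continuousAt
  set B : ℝ → ℝ := fun t => Real.exp (L * t) * (δ + I t) with hBdef
  have hBderiv : ∀ t : ℝ, HasDerivAt B (L * Real.exp (L * t) * (δ + I t)
      + Real.exp (L * t) * w t) t := by
    intro t
    have h1 : HasDerivAt (fun t : ℝ => Real.exp (L * t)) (Real.exp (L * t) * L) t := by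
      simpa [Function.comp_def] using
        (Real.hasDerivAt_exp (L * t)).comp t ((hasDerivAt_id t).const_mul L)
    have h2 : HasDerivAt (fun t => δ + I t) (w t) t := (hI t).const_add δ
    have := h1.mul h2
    have e : L * Real.exp (L * t) * (δ + I t) + Real.exp (L * t) * w t
        = Real.exp (L * t) * L * (δ + I t) + Real.exp (L * t) * w t := by ring
    rw [e]; exact this
  have hfc : ContinuousOn f (Icc 0 T) := fun t ht => (hf t ht).continuousAt.continuousWithinAt
  have hfd : ∀ x ∈ Ico (0:ℝ) T, HasDerivWithinAt f (f' x) (Ici x) x := fun x hx =>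
    (hf x ⟨hx.1, hx.2.le⟩).hasDerivWithinAt
  have key : ∀ ε > (0:ℝ), ∀ t ∈ Icc (0:ℝ) T,
      ‖f t‖ ≤ B t + ε * Real.exp ((2 * L + 2) * t) := by
    intro ε hε
    set Bε : ℝ → ℝ := fun t => B t + ε * Real.exp ((2 * L + 2) * t) with hBε
    have hBεd : ∀ x : ℝ, HasDerivAt Bε ((L * Real.exp (L * x) * (δ + I x)
        + Real.exp (L * x) * w x) + ε * (Real.exp ((2 * L + 2) * x) * (2 * L + 2))) x := by
      intro x
      have h3 : HasDerivAt (fun t : ℝ => ε * Real.exp ((2 * L + 2) * t))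
          (ε * (Real.exp ((2 * L + 2) * x) * (2 * L + 2))) x := by
        simpa [mul_comm, mul_assoc, mul_left_comm] using
          (((Real.hasDerivAt_exp ((2 * L + 2) * x)).comp x
            ((hasDerivAt_id x).const_mul (2 * L + 2))).const_mul ε)
      exact (hBderiv x).add h3
    have ha : ‖f 0‖ ≤ Bε 0 := by
      have : Bε 0 = δ + ε := by
        simp [hBε, hBdef, hIdef, intervalIntegral.integral_same]
      rw [this]
      exact h0.trans (by linarith)
    have bound : ∀ x ∈ Ico (0:ℝ) T, ‖f x‖ = Bε x → ‖f' x‖ <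
        (L * Real.exp (L * x) * (δ + I x) + Real.exp (L * x) * w x)
          + ε * (Real.exp ((2 * L + 2) * x) * (2 * L + 2)) := by
      intro x hx heq
      have hxI : x ∈ Icc (0:ℝ) T := ⟨hx.1, hx.2.le⟩
      have h1 : ‖f' x‖ ≤ L * ‖f x‖ + w x := hbound x hxI
      rw [heq] at h1
      have hexp1 : (1:ℝ) ≤ Real.exp (L * x) := by
        rw [← Real.exp_zero]
        exact Real.exp_le_exp.2 (mul_nonneg hL hx.1)
      have hwx : w x ≤ Real.exp (L * x) * w x := le_mul_of_one_le_left (hw0 x) hexp1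
      have hIx0 : 0 ≤ I x := intervalIntegral.integral_nonneg hx.1 fun s _ => hw0 s
      have hstrict : L * (ε * Real.exp ((2 * L + 2) * x)) <
          ε * (Real.exp ((2 * L + 2) * x) * (2 * L + 2)) := by
        have hpos : 0 < ε * Real.exp ((2 * L + 2) * x) := by positivity
        nlinarith
      calc ‖f' x‖ ≤ L * (B x + ε * Real.exp ((2 * L + 2) * x)) + w x := h1
        _ = L * Real.exp (L * x) * (δ + I x) + L * (ε * Real.exp ((2 * L + 2) * x)) + w x := by
            rw [hBdef]; ring
        _ < (L * Real.exp (L * x) * (δ + I x) + Real.exp (L * x) * w x)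
              + ε * (Real.exp ((2 * L + 2) * x) * (2 * L + 2)) := by
            have := hwx
            linarith
    exact fun t ht =>
      image_norm_le_of_norm_deriv_right_lt_deriv_boundary hfc hfd ha hBεd bound ht
  have hB_le : ∀ t ∈ Icc (0:ℝ) T, B t ≤ Real.exp (L * T) * (δ + I T) := by
    intro t ht
    have h1 : Real.exp (L * t) ≤ Real.exp (L * T) :=
      Real.exp_le_exp.2 (mul_le_mul_of_nonneg_left ht.2 hL)
    have hIt0 : 0 ≤ I t := intervalIntegral.integral_nonneg ht.1 fun s _ => hw0 s
    have h2 : I t ≤ I T := by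
      have hsplit : I T = I t + ∫ s in t..T, w s := by
        rw [hIdef]
        exact (intervalIntegral.integral_add_adjacent_intervals
          (hw.intervalIntegrable _ _) (hw.intervalIntegrable _ _)).symm
      rw [hsplit]
      have : 0 ≤ ∫ s in t..T, w s :=
        intervalIntegral.integral_nonneg ht.2 fun s _ => hw0 s
      linarith
    exact mul_le_mul h1 (by linarith) (by linarith) (Real.exp_pos _).le
  intro t ht
  have hle : ∀ ε' > (0:ℝ), ‖f t‖ ≤ B t + ε' := by
    intro ε' hε'
    have hεp : 0 < ε' / Real.exp ((2 * L + 2) * t) := by positivity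
    have := key _ hεp t ht
    rwa [div_mul_cancel₀ _ (Real.exp_ne_zero _)] at this
  exact (le_of_forall_pos_le_add hle).trans (hB_le t ht)

lemma int_add_bound {u : ℝ → ℝ} (hu : Continuous u) (hu0 : ∀ s, 0 ≤ u s)
    {T CC c Mv : ℝ} (hT : 0 < T) (hCC : 0 ≤ CC)
    (hM : Real.sqrt (∫ s in (0:ℝ)..T, (u s) ^ 2) ≤ Mv) :
    ∫ s in (0:ℝ)..T, (CC * u s + c) ≤ CC * (Real.sqrt T * Mv) + T * c := by
  rw [intervalIntegral.integral_add (f := fun s => CC * u s) (g := fun _ => c)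
    ((continuous_const.mul hu : Continuous fun s => CC * u s).intervalIntegrable _ _)
    intervalIntegrable_const, intervalIntegral.integral_const_mul,
    intervalIntegral.integral_const]
  have h1 : ∫ s in (0:ℝ)..T, u s ≤ Real.sqrt T * Mv := by
    refine (cs_int hu hu0 hT).trans ?_
    exact mul_le_mul_of_nonneg_left hM (Real.sqrt_nonneg _)
  have h2 : CC * ∫ s in (0:ℝ)..T, u s ≤ CC * (Real.sqrt T * Mv) :=
    mul_le_mul_of_nonneg_left h1 hCC
  simp only [smul_eq_mul, sub_zero]
  linarith

end Helpers

set_option maxHeartbeats 2000000 in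
/-- joint Lipschitz-type stability of the adjoint variable `h` in the
data `(A, r, Y)`: for any a priori bounds `Ā, Ē, r̄, M ≥ 0` there is a constant
`K ≥ 0` such that
`‖h(t) − h'(t)‖ ≤ K ((∫₀ᵀ‖Y−Y'‖²)^{1/2} + sup_t ‖A(t)−A'(t)‖ + sup_t ‖r(t)−r'(t)‖)`. -/
theorem statement10
    (d d' : ℕ) (hd : 1 ≤ d) (hd' : 1 ≤ d') (T : ℝ) (hT : 0 < T) (lam : ℝ) (hlam : 0 < lam)
    (C : Matrix (Fin d') (Fin d) ℝ)
    (Q : Matrix (Fin d) (Fin d) ℝ) (hQ : Q.PosSemidef) :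
    ∀ Abar Ebar rbar M : ℝ, 0 ≤ Abar → 0 ≤ Ebar → 0 ≤ rbar → 0 ≤ M →
    ∃ K : ℝ, 0 ≤ K ∧
      ∀ (A A' : ℝ → Matrix (Fin d) (Fin d) ℝ)
        (r r' : ℝ → Fin d → ℝ) (Y Y' : ℝ → Fin d' → ℝ)
        (E E' : ℝ → Matrix (Fin d) (Fin d) ℝ)
        (h h' : ℝ → Fin d → ℝ),
        (∀ i j, ContinuousOn (fun t => A t i j) (Icc 0 T)) →
        (∀ i j, ContinuousOn (fun t => A' t i j) (Icc 0 T)) →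
        (∀ i, ContinuousOn (fun t => r t i) (Icc 0 T)) →
        (∀ i, ContinuousOn (fun t => r' t i) (Icc 0 T)) →
        (∀ i, ContinuousOn (fun t => Y t i) (Icc 0 T)) →
        (∀ i, ContinuousOn (fun t => Y' t i) (Icc 0 T)) →
        (∀ t ∈ Icc (0:ℝ) T, frob (A t) ≤ Abar) →
        (∀ t ∈ Icc (0:ℝ) T, frob (A' t) ≤ Abar) →
        (∀ t ∈ Icc (0:ℝ) T, evnorm (r t) ≤ rbar) →
        (∀ t ∈ Icc (0:ℝ) T, evnorm (r' t) ≤ rbar) →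
        Real.sqrt (∫ s in (0:ℝ)..T, evnorm (Y s) ^ 2) ≤ M →
        Real.sqrt (∫ s in (0:ℝ)..T, evnorm (Y' s) ^ 2) ≤ M →
        E 0 = Q → E' 0 = Q →
        (∀ t ∈ Icc (0:ℝ) T, ∀ i j,
          HasDerivAt (fun s => E s i j)
            ((Cᵀ * C - (A t)ᵀ * E t - E t * A t - (1 / lam) • (E t * E t)) i j) t) →
        (∀ t ∈ Icc (0:ℝ) T, ∀ i j,
          HasDerivAt (fun s => E' s i j)
            ((Cᵀ * C - (A' t)ᵀ * E' t - E' t * A' t - (1 / lam) • (E' t * E' t)) i j) t) →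
        (∀ t ∈ Icc (0:ℝ) T, frob (E t) ≤ Ebar) →
        (∀ t ∈ Icc (0:ℝ) T, frob (E' t) ≤ Ebar) →
        h 0 = 0 → h' 0 = 0 →
        (∀ t ∈ Icc (0:ℝ) T, ∀ i,
          HasDerivAt (fun s => h s i)
            ((-(((A t)ᵀ + (1 / lam) • E t).mulVec (h t))
              - (Cᵀ.mulVec (Y t) + (E t).mulVec (r t))) i) t) →
        (∀ t ∈ Icc (0:ℝ) T, ∀ i,
          HasDerivAt (fun s => h' s i)
            ((-(((A' t)ᵀ + (1 / lam) • E' t).mulVec (h' t))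
              - (Cᵀ.mulVec (Y' t) + (E' t).mulVec (r' t))) i) t) →
        ∀ t ∈ Icc (0:ℝ) T,
          evnorm (h t - h' t) ≤
            K * (Real.sqrt (∫ s in (0:ℝ)..T, evnorm (Y s - Y' s) ^ 2)
              + (⨆ s : Icc (0:ℝ) T, frob (A s - A' s))
              + (⨆ s : Icc (0:ℝ) T, evnorm (r s - r' s))) := by
  intro Abar Ebar rbar M hAbar hEbar hrbar hM
  set L : ℝ := Abar + Ebar / lam with hLdef
  have hL : 0 ≤ L := by positivity
  set cbar : ℝ := frob Cᵀ with hcdef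
  have hc : 0 ≤ cbar := frob_nonneg _
  set Hbar : ℝ := Real.exp (L * T) * (cbar * (Real.sqrt T * M) + T * (Ebar * rbar)) with hHdef
  have hHbar : 0 ≤ Hbar := by positivity
  set L2 : ℝ := 2 * Abar + 2 * (Ebar / lam) with hL2def
  have hL2 : 0 ≤ L2 := by positivity
  set KE : ℝ := Real.exp (L2 * T) * (T * (2 * Ebar)) with hKEdef
  have hKE : 0 ≤ KE := by positivity
  refine ⟨Real.exp (L * T) * (cbar * Real.sqrt T
    + T * ((1 + KE / lam) * Hbar + KE * rbar + Ebar) + 1), by positivity, ?_⟩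
  intro A A' r r' Y Y' E E' h h' hAc hA'c hrc hr'c hYc hY'c hAb hA'b hrb hr'b hYM hY'M
    hE0 hE'0 hEde hE'de hEb hE'b hh0 hh'0 hhd hh'd
  -- projection onto [0, T]
  set π : ℝ → ℝ := fun s => (projIcc (0:ℝ) T hT.le s : ℝ) with hπdef
  have hπc : Continuous π := continuous_projIcc.subtype_val
  have hπmem : ∀ s, π s ∈ Icc (0:ℝ) T := fun s => (projIcc (0:ℝ) T hT.le s).2
  have hπid : ∀ s ∈ Icc (0:ℝ) T, π s = s := fun s hs => by
    rw [hπdef]; simp [projIcc_of_mem hT.le hs]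
  have compc : ∀ {g : ℝ → ℝ}, ContinuousOn g (Icc (0:ℝ) T) →
      Continuous (fun s => g (π s)) := fun hg => hg.comp_continuous hπc hπmem
  have h0mem : (0:ℝ) ∈ Icc (0:ℝ) T := left_mem_Icc.2 hT.le
  -- the sup quantities
  set ΔA : ℝ := ⨆ s : Icc (0:ℝ) T, frob (A s - A' s) with hΔAdef
  set Δr : ℝ := ⨆ s : Icc (0:ℝ) T, evnorm (r s - r' s) with hΔrdef
  haveI hne : Nonempty (Icc (0:ℝ) T) := ⟨⟨0, h0mem⟩⟩
  have hbddA : BddAbove (range fun s : Icc (0:ℝ) T => frob (A s - A' s)) := by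
    refine ⟨2 * Abar, ?_⟩
    rintro x ⟨s, rfl⟩
    have h1 := hAb s s.2; have h2 := hA'b s s.2
    exact (frob_sub_le _ _).trans (by linarith)
  have hΔA_ub : ∀ s ∈ Icc (0:ℝ) T, frob (A s - A' s) ≤ ΔA := fun s hs =>
    le_ciSup hbddA (⟨s, hs⟩ : Icc (0:ℝ) T)
  have hΔA0 : 0 ≤ ΔA := (frob_nonneg _).trans (hΔA_ub 0 h0mem)
  have hbddr : BddAbove (range fun s : Icc (0:ℝ) T => evnorm (r s - r' s)) := by
    refine ⟨2 * rbar, ?_⟩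
    rintro x ⟨s, rfl⟩
    have h1 := hrb s s.2; have h2 := hr'b s s.2
    exact (evnorm_sub_le _ _).trans (by linarith)
  have hΔr_ub : ∀ s ∈ Icc (0:ℝ) T, evnorm (r s - r' s) ≤ Δr := fun s hs =>
    le_ciSup hbddr (⟨s, hs⟩ : Icc (0:ℝ) T)
  have hΔr0 : 0 ≤ Δr := (evnorm_nonneg _).trans (hΔr_ub 0 h0mem)
  have hlam' : |1 / lam| = 1 / lam := abs_of_pos (by positivity)
  ------------------------------------------------------------------
  -- STEP A : a priori bound on h'
  ------------------------------------------------------------------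
  have frob_coef' : ∀ t ∈ Icc (0:ℝ) T, frob ((A' t)ᵀ + (1 / lam) • E' t) ≤ L := by
    intro t ht
    refine (frob_add_le _ _).trans ?_
    rw [frob_transpose, frob_smul, hlam']
    have h1 := hA'b t ht; have h2 := hE'b t ht
    have h3 : (1 / lam) * frob (E' t) ≤ (1 / lam) * Ebar :=
      mul_le_mul_of_nonneg_left h2 (by positivity)
    rw [hLdef]
    have : Ebar / lam = (1 / lam) * Ebar := by ring
    linarith [this ▸ h3]
  have stepA : ∀ t ∈ Icc (0:ℝ) T, evnorm (h' t) ≤ Hbar := by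
    set wH : ℝ → ℝ := fun s => cbar * evnorm (Y' (π s)) + Ebar * rbar with hwHdef
    have hwHc : Continuous wH := by
      refine Continuous.add ?_ continuous_const
      exact continuous_const.mul (continuous_evnorm_comp fun i => compc (hY'c i))
    have hwH0 : ∀ s, 0 ≤ wH s := fun s =>
      add_nonneg (mul_nonneg hc (evnorm_nonneg _)) (mul_nonneg hEbar hrbar)
    have hfA : ∀ t ∈ Icc (0:ℝ) T, HasDerivAt (fun s => toEuc (h' s))
        (toEuc (-(((A' t)ᵀ + (1 / lam) • E' t).mulVec (h' t))
          - (Cᵀ.mulVec (Y' t) + (E' t).mulVec (r' t)))) t := fun t ht =>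
      hasDerivAt_toEuc (fun i => hh'd t ht i)
    have h0A : ‖toEuc (h' 0)‖ ≤ (0:ℝ) := by
      rw [norm_toEuc, hh'0]
      simp [evnorm]
    have hbA : ∀ t ∈ Icc (0:ℝ) T,
        ‖toEuc (-(((A' t)ᵀ + (1 / lam) • E' t).mulVec (h' t))
          - (Cᵀ.mulVec (Y' t) + (E' t).mulVec (r' t)))‖ ≤ L * ‖toEuc (h' t)‖ + wH t := by
      intro t ht
      rw [norm_toEuc, norm_toEuc]
      have e1 : evnorm (((A' t)ᵀ + (1 / lam) • E' t).mulVec (h' t)) ≤ L * evnorm (h' t) :=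
        (evnorm_mulVec_le _ _).trans
          (mul_le_mul_of_nonneg_right (frob_coef' t ht) (evnorm_nonneg _))
      have e2 : evnorm (Cᵀ.mulVec (Y' t)) ≤ cbar * evnorm (Y' t) :=
        evnorm_mulVec_le _ _
      have e3 : evnorm ((E' t).mulVec (r' t)) ≤ Ebar * rbar :=
        (evnorm_mulVec_le _ _).trans
          (mul_le_mul (hE'b t ht) (hr'b t ht) (evnorm_nonneg _) hEbar)
      have e4 := evnorm_neg_sub_le (((A' t)ᵀ + (1 / lam) • E' t).mulVec (h' t))
        (Cᵀ.mulVec (Y' t) + (E' t).mulVec (r' t))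
      have e5 := evnorm_add_le (Cᵀ.mulVec (Y' t)) ((E' t).mulVec (r' t))
      have hπt : π t = t := hπid t ht
      have hwt : wH t = cbar * evnorm (Y' t) + Ebar * rbar := by rw [hwHdef]; simp [hπt]
      rw [hwt]
      linarith
    have gr := gronwall_aux hT hL le_rfl hfA hwHc hwH0 h0A hbA
    intro t ht
    have h1 := gr t ht
    rw [norm_toEuc] at h1
    refine h1.trans ?_
    rw [hHdef]
    refine mul_le_mul_of_nonneg_left ?_ (Real.exp_pos _).le
    rw [zero_add]
    have hint : ∫ s in (0:ℝ)..T, wH s ≤ cbar * (Real.sqrt T * M) + T * (Ebar * rbar) := by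
      refine int_add_bound (continuous_evnorm_comp fun i => compc (hY'c i))
        (fun s => evnorm_nonneg _) hT hc ?_
      have hcongr : ∫ s in (0:ℝ)..T, evnorm (Y' (π s)) ^ 2
          = ∫ s in (0:ℝ)..T, evnorm (Y' s) ^ 2 := by
        refine intervalIntegral.integral_congr fun s hs => ?_
        rw [uIcc_of_le hT.le] at hs
        rw [hπid s hs]
      rw [hcongr]
      exact hY'M
    exact hint
  ------------------------------------------------------------------
  -- STEP B : stability of the Riccati solution
  ------------------------------------------------------------------
  have stepB : ∀ t ∈ Icc (0:ℝ) T, frob (E t - E' t) ≤ KE * ΔA := by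
    set Dmat : ℝ → Matrix (Fin d) (Fin d) ℝ := fun t =>
      (-((A t)ᵀ * (E t - E' t)) - (A t - A' t)ᵀ * E' t)
      + (-((E t - E' t) * A t) - E' t * (A t - A' t))
      - (1 / lam) • (E t * (E t - E' t) + (E t - E' t) * E' t) with hDmatdef
    have hmatid : ∀ t,
        (Cᵀ * C - (A t)ᵀ * E t - E t * A t - (1 / lam) • (E t * E t))
          - (Cᵀ * C - (A' t)ᵀ * E' t - E' t * A' t - (1 / lam) • (E' t * E' t))
        = Dmat t := by
      intro t
      rw [hDmatdef]
      simp only [Matrix.transpose_sub, Matrix.sub_mul, Matrix.mul_sub, smul_sub, smul_add]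
      module
    have hfB : ∀ t ∈ Icc (0:ℝ) T, HasDerivAt (fun s => mEuc (E s - E' s))
        (mEuc (Dmat t)) t := by
      intro t ht
      refine hasDerivAt_toEuc fun p => ?_
      have h1 := (hEde t ht p.1 p.2).sub (hE'de t ht p.1 p.2)
      have h2 : (Cᵀ * C - (A t)ᵀ * E t - E t * A t - (1 / lam) • (E t * E t)) p.1 p.2
          - (Cᵀ * C - (A' t)ᵀ * E' t - E' t * A' t - (1 / lam) • (E' t * E' t)) p.1 p.2
          = Dmat t p.1 p.2 := by
        rw [← hmatid t]; simp [Matrix.sub_apply]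
      rw [h2] at h1
      exact h1
    have h0B : ‖mEuc (E 0 - E' 0)‖ ≤ (0:ℝ) := by
      rw [hE0, hE'0, sub_self]
      rw [← frob_eq_norm]
      simp [frob]
    have hbB : ∀ t ∈ Icc (0:ℝ) T,
        ‖mEuc (Dmat t)‖ ≤ L2 * ‖mEuc (E t - E' t)‖ + (2 * Ebar * ΔA) := by
      intro t ht
      rw [← frob_eq_norm, ← frob_eq_norm]
      set G := frob (E t - E' t) with hGdef
      have hG0 : 0 ≤ G := frob_nonneg _
      have b1 : frob ((A t)ᵀ * (E t - E' t)) ≤ Abar * G := by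
        refine (frob_mul_le _ _).trans ?_
        rw [frob_transpose]
        exact mul_le_mul_of_nonneg_right (hAb t ht) hG0
      have b2 : frob ((A t - A' t)ᵀ * E' t) ≤ ΔA * Ebar := by
        refine (frob_mul_le _ _).trans ?_
        rw [frob_transpose]
        exact mul_le_mul (hΔA_ub t ht) (hE'b t ht) (frob_nonneg _) hΔA0
      have b3 : frob ((E t - E' t) * A t) ≤ G * Abar :=
        (frob_mul_le _ _).trans (mul_le_mul_of_nonneg_left (hAb t ht) hG0)
      have b4 : frob (E' t * (A t - A' t)) ≤ Ebar * ΔA :=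
        (frob_mul_le _ _).trans
          (mul_le_mul (hE'b t ht) (hΔA_ub t ht) (frob_nonneg _) hEbar)
      have b5 : frob (E t * (E t - E' t)) ≤ Ebar * G :=
        (frob_mul_le _ _).trans (mul_le_mul_of_nonneg_right (hEb t ht) hG0)
      have b6 : frob ((E t - E' t) * E' t) ≤ G * Ebar :=
        (frob_mul_le _ _).trans (mul_le_mul_of_nonneg_left (hE'b t ht) hG0)
      have t1 : frob (-((A t)ᵀ * (E t - E' t)) - (A t - A' t)ᵀ * E' t)
          ≤ Abar * G + ΔA * Ebar := (frob_neg_sub_le _ _).trans (by linarith)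
      have t2 : frob (-((E t - E' t) * A t) - E' t * (A t - A' t))
          ≤ G * Abar + Ebar * ΔA := (frob_neg_sub_le _ _).trans (by linarith)
      have t3 : frob ((1 / lam) • (E t * (E t - E' t) + (E t - E' t) * E' t))
          ≤ (1 / lam) * (Ebar * G + G * Ebar) := by
        rw [frob_smul, hlam']
        refine mul_le_mul_of_nonneg_left ?_ (by positivity)
        exact (frob_add_le _ _).trans (by linarith)
      have ttot : frob (Dmat t) ≤ (Abar * G + ΔA * Ebar) + (G * Abar + Ebar * ΔA)
          + (1 / lam) * (Ebar * G + G * Ebar) := by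
        rw [hDmatdef]
        refine (frob_sub_le _ _).trans ?_
        have := frob_add_le (-((A t)ᵀ * (E t - E' t)) - (A t - A' t)ᵀ * E' t)
          (-((E t - E' t) * A t) - E' t * (A t - A' t))
        linarith
      refine ttot.trans ?_
      rw [hL2def]
      have : (1 / lam) * (Ebar * G + G * Ebar) = 2 * (Ebar / lam) * G := by ring
      rw [this]
      nlinarith
    have gr := gronwall_aux hT hL2 le_rfl hfB continuous_const
      (fun s => by positivity) h0B hbB
    intro t ht
    have h1 := gr t ht
    rw [← frob_eq_norm] at h1
    refine h1.trans ?_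
    rw [intervalIntegral.integral_const, zero_add, hKEdef]
    simp only [smul_eq_mul, sub_zero]
    ring_nf
    nlinarith [Real.exp_pos (L2 * T)]
  ------------------------------------------------------------------
  -- STEP C : the difference h - h'
  ------------------------------------------------------------------
  set S : ℝ := Real.sqrt (∫ s in (0:ℝ)..T, evnorm (Y s - Y' s) ^ 2) with hSdef
  have hS0 : 0 ≤ S := Real.sqrt_nonneg _
  set cG : ℝ := ΔA * ((1 + KE / lam) * Hbar) + KE * ΔA * rbar + Ebar * Δr with hcGdef
  have hcG0 : 0 ≤ cG := by positivity
  set dvec : ℝ → Fin d → ℝ := fun t =>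
    -(((A t)ᵀ + (1 / lam) • E t).mulVec (h t - h' t))
    - (((A t)ᵀ - (A' t)ᵀ + (1 / lam) • (E t - E' t)).mulVec (h' t))
    - Cᵀ.mulVec (Y t - Y' t)
    - ((E t - E' t).mulVec (r t) + (E' t).mulVec (r t - r' t)) with hdvecdef
  have hvecid : ∀ t,
      (-(((A t)ᵀ + (1 / lam) • E t).mulVec (h t))
         - (Cᵀ.mulVec (Y t) + (E t).mulVec (r t)))
      - (-(((A' t)ᵀ + (1 / lam) • E' t).mulVec (h' t))
         - (Cᵀ.mulVec (Y' t) + (E' t).mulVec (r' t)))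
      = dvec t := by
    intro t
    rw [hdvecdef]
    simp only [Matrix.add_mulVec, Matrix.sub_mulVec, Matrix.mulVec_sub, Matrix.mulVec_add,
      Matrix.smul_mulVec, smul_sub]
    module
  have hfC : ∀ t ∈ Icc (0:ℝ) T, HasDerivAt (fun s => toEuc (h s - h' s))
      (toEuc (dvec t)) t := by
    intro t ht
    refine hasDerivAt_toEuc fun i => ?_
    have h1 := (hhd t ht i).sub (hh'd t ht i)
    have h2 : (-(((A t)ᵀ + (1 / lam) • E t).mulVec (h t))
          - (Cᵀ.mulVec (Y t) + (E t).mulVec (r t))) i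
        - (-(((A' t)ᵀ + (1 / lam) • E' t).mulVec (h' t))
          - (Cᵀ.mulVec (Y' t) + (E' t).mulVec (r' t))) i = dvec t i := by
      rw [← hvecid t]; simp [Pi.sub_apply]
    rw [h2] at h1
    exact h1
  set wG : ℝ → ℝ := fun s => cbar * evnorm (Y (π s) - Y' (π s)) + cG with hwGdef
  have hwGc : Continuous wG := by
    refine Continuous.add ?_ continuous_const
    refine continuous_const.mul (continuous_evnorm_comp fun i => ?_)
    have : (fun s => (Y (π s) - Y' (π s)) i) = fun s => Y (π s) i - Y' (π s) i := rfl
    rw [this]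
    exact (compc (hYc i)).sub (compc (hY'c i))
  have hwG0 : ∀ s, 0 ≤ wG s := fun s =>
    add_nonneg (mul_nonneg hc (evnorm_nonneg _)) hcG0
  have h0C : ‖toEuc (h 0 - h' 0)‖ ≤ (0:ℝ) := by
    rw [hh0, hh'0, sub_self, norm_toEuc]
    simp [evnorm]
  have frob_coef : ∀ t ∈ Icc (0:ℝ) T, frob ((A t)ᵀ + (1 / lam) • E t) ≤ L := by
    intro t ht
    refine (frob_add_le _ _).trans ?_
    rw [frob_transpose, frob_smul, hlam']
    have h1 := hAb t ht; have h2 := hEb t ht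
    have h3 : (1 / lam) * frob (E t) ≤ (1 / lam) * Ebar :=
      mul_le_mul_of_nonneg_left h2 (by positivity)
    rw [hLdef]
    have : Ebar / lam = (1 / lam) * Ebar := by ring
    linarith [this ▸ h3]
  have hbC : ∀ t ∈ Icc (0:ℝ) T, ‖toEuc (dvec t)‖ ≤ L * ‖toEuc (h t - h' t)‖ + wG t := by
    intro t ht
    rw [norm_toEuc, norm_toEuc, hdvecdef]
    have e1 : evnorm (((A t)ᵀ + (1 / lam) • E t).mulVec (h t - h' t))
        ≤ L * evnorm (h t - h' t) :=
      (evnorm_mulVec_le _ _).trans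
        (mul_le_mul_of_nonneg_right (frob_coef t ht) (evnorm_nonneg _))
    have e2 : evnorm (((A t)ᵀ - (A' t)ᵀ + (1 / lam) • (E t - E' t)).mulVec (h' t))
        ≤ ΔA * ((1 + KE / lam) * Hbar) := by
      refine (evnorm_mulVec_le _ _).trans ?_
      have f1 : frob ((A t)ᵀ - (A' t)ᵀ + (1 / lam) • (E t - E' t))
          ≤ ΔA + (1 / lam) * (KE * ΔA) := by
        refine (frob_add_le _ _).trans ?_
        have g1 : frob ((A t)ᵀ - (A' t)ᵀ) ≤ ΔA := by
          rw [← Matrix.transpose_sub, frob_transpose]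
          exact hΔA_ub t ht
        have g2 : frob ((1 / lam) • (E t - E' t)) ≤ (1 / lam) * (KE * ΔA) := by
          rw [frob_smul, hlam']
          exact mul_le_mul_of_nonneg_left (stepB t ht) (by positivity)
        linarith
      have f2 : evnorm (h' t) ≤ Hbar := stepA t ht
      calc frob ((A t)ᵀ - (A' t)ᵀ + (1 / lam) • (E t - E' t)) * evnorm (h' t)
          ≤ (ΔA + (1 / lam) * (KE * ΔA)) * Hbar :=
            mul_le_mul f1 f2 (evnorm_nonneg _) (by positivity)
        _ = ΔA * ((1 + KE / lam) * Hbar) := by ring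
    have e3 : evnorm (Cᵀ.mulVec (Y t - Y' t)) ≤ cbar * evnorm (Y t - Y' t) :=
      evnorm_mulVec_le _ _
    have e4 : evnorm ((E t - E' t).mulVec (r t) + (E' t).mulVec (r t - r' t))
        ≤ KE * ΔA * rbar + Ebar * Δr := by
      refine (evnorm_add_le _ _).trans ?_
      have g1 : evnorm ((E t - E' t).mulVec (r t)) ≤ KE * ΔA * rbar :=
        (evnorm_mulVec_le _ _).trans
          (mul_le_mul (stepB t ht) (hrb t ht) (evnorm_nonneg _) (by positivity))
      have g2 : evnorm ((E' t).mulVec (r t - r' t)) ≤ Ebar * Δr :=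
        (evnorm_mulVec_le _ _).trans
          (mul_le_mul (hE'b t ht) (hΔr_ub t ht) (evnorm_nonneg _) hEbar)
      linarith
    have tr1 := evnorm_sub_le
      (-(((A t)ᵀ + (1 / lam) • E t).mulVec (h t - h' t))
        - (((A t)ᵀ - (A' t)ᵀ + (1 / lam) • (E t - E' t)).mulVec (h' t))
        - Cᵀ.mulVec (Y t - Y' t))
      ((E t - E' t).mulVec (r t) + (E' t).mulVec (r t - r' t))
    have tr2 := evnorm_sub_le
      (-(((A t)ᵀ + (1 / lam) • E t).mulVec (h t - h' t))
        - (((A t)ᵀ - (A' t)ᵀ + (1 / lam) • (E t - E' t)).mulVec (h' t)))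
      (Cᵀ.mulVec (Y t - Y' t))
    have tr3 := evnorm_neg_sub_le
      (((A t)ᵀ + (1 / lam) • E t).mulVec (h t - h' t))
      (((A t)ᵀ - (A' t)ᵀ + (1 / lam) • (E t - E' t)).mulVec (h' t))
    have hπt : π t = t := hπid t ht
    have hwt : wG t = cbar * evnorm (Y t - Y' t) + cG := by rw [hwGdef]; simp [hπt]
    rw [hwt, hcGdef]
    linarith
  have grC := gronwall_aux hT hL le_rfl hfC hwGc hwG0 h0C hbC
  intro t ht
  have h1 := grC t ht
  rw [norm_toEuc] at h1
  refine h1.trans ?_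
  rw [zero_add]
  have hint : ∫ s in (0:ℝ)..T, wG s ≤ cbar * (Real.sqrt T * S) + T * cG := by
    rw [hwGdef]
    refine int_add_bound ?_ (fun s => evnorm_nonneg _) hT hc ?_
    · refine continuous_evnorm_comp fun i => ?_
      have : (fun s => (Y (π s) - Y' (π s)) i) = fun s => Y (π s) i - Y' (π s) i := rfl
      rw [this]
      exact (compc (hYc i)).sub (compc (hY'c i))
    · have hcongr : ∫ s in (0:ℝ)..T, evnorm (Y (π s) - Y' (π s)) ^ 2
          = ∫ s in (0:ℝ)..T, evnorm (Y s - Y' s) ^ 2 := by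
        refine intervalIntegral.integral_congr fun s hs => ?_
        rw [uIcc_of_le hT.le] at hs
        rw [hπid s hs]
      rw [hcongr, ← hSdef]
  have hfinal : Real.exp (L * T) * (∫ s in (0:ℝ)..T, wG s)
      ≤ (Real.exp (L * T) * (cbar * Real.sqrt T
        + T * ((1 + KE / lam) * Hbar + KE * rbar + Ebar) + 1)) * (S + ΔA + Δr) := by
    have hR0 : 0 ≤ S + ΔA + Δr := by positivity
    have step1 : ∫ s in (0:ℝ)..T, wG s ≤ cbar * (Real.sqrt T * S) + T * cG := hint
    have step2 : cbar * (Real.sqrt T * S) + T * cG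
        ≤ (cbar * Real.sqrt T + T * ((1 + KE / lam) * Hbar + KE * rbar + Ebar) + 1)
          * (S + ΔA + Δr) := by
      rw [hcGdef]
      have hsT : 0 ≤ Real.sqrt T := Real.sqrt_nonneg _
      have hP0 : (0:ℝ) ≤ (1 + KE / lam) * Hbar := by positivity
      have p1 : 0 ≤ cbar * Real.sqrt T * ((S + ΔA + Δr) - S) :=
        mul_nonneg (by positivity) (by linarith)
      have p2 : 0 ≤ T * ((1 + KE / lam) * Hbar) * ((S + ΔA + Δr) - ΔA) :=
        mul_nonneg (by positivity) (by linarith)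
      have p3 : 0 ≤ T * (KE * rbar) * ((S + ΔA + Δr) - ΔA) :=
        mul_nonneg (by positivity) (by linarith)
      have p4 : 0 ≤ T * Ebar * ((S + ΔA + Δr) - Δr) :=
        mul_nonneg (by positivity) (by linarith)
      nlinarith [p1, p2, p3, p4, hR0]
    calc Real.exp (L * T) * (∫ s in (0:ℝ)..T, wG s)
        ≤ Real.exp (L * T) * ((cbar * Real.sqrt T
            + T * ((1 + KE / lam) * Hbar + KE * rbar + Ebar) + 1) * (S + ΔA + Δr)) := by
          refine mul_le_mul_of_nonneg_left (step1.trans step2) (Real.exp_pos _).le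
      _ = _ := by ring
  exact hfinal
end
end

section
/- For every x₀ ∈ ℝ^d, every continuous control u : [0,T] → ℝ^d and every differentiable x : [0,T] → ℝ^d with x(0) = x₀ and x'(t) = A(t)x(t) + r(t) + u(t) for all t, the cost satisfies: x₀ᵀQx₀ + ∫₀ᵀ ‖ζ(t) − Cx(t)‖² dt + λ ∫₀ᵀ ‖u(t)‖² dt ≥ S, where S = ∫₀ᵀ (‖ζ(t)‖² − 2 r(t)ᵀ h(t) − (1/λ)‖h(t)‖²) dt − h(T)ᵀ E(T)⁻¹ h(T). -/
open Matrix Set intervalIntegral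
open scoped Matrix

noncomputable section

lemma evnorm_sq {n : Type*} [Fintype n] (v : n → ℝ) : evnorm v ^ 2 = v ⬝ᵥ v := by
  have : (0:ℝ) ≤ ∑ i, (v i) ^ 2 := Finset.sum_nonneg fun i _ => sq_nonneg _
  rw [evnorm, Real.sq_sqrt this, dotProduct]
  exact Finset.sum_congr rfl fun i _ => (sq (v i)).symm ▸ by ring

lemma dot_mulVec_symm {n : Type*} [Fintype n] {M : Matrix n n ℝ} (hM : Mᵀ = M)
    (v w : n → ℝ) : v ⬝ᵥ M.mulVec w = w ⬝ᵥ M.mulVec v := by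
  rw [Matrix.dotProduct_mulVec]
  nth_rewrite 1 [← hM]
  rw [Matrix.vecMul_transpose, dotProduct_comm]

lemma dot_mulVec_transpose {m n : Type*} [Fintype m] [Fintype n] (M : Matrix m n ℝ)
    (v : n → ℝ) (w : m → ℝ) : v ⬝ᵥ Mᵀ.mulVec w = w ⬝ᵥ M.mulVec v := by
  rw [Matrix.mulVec_transpose, dotProduct_comm, ← Matrix.dotProduct_mulVec]

lemma hasDerivAt_dot {n : Type*} [Fintype n] {v w : ℝ → n → ℝ} {v' w' : n → ℝ} {t : ℝ}
    (hv : ∀ i, HasDerivAt (fun s => v s i) (v' i) t)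
    (hw : ∀ i, HasDerivAt (fun s => w s i) (w' i) t) :
    HasDerivAt (fun s => v s ⬝ᵥ w s) (v' ⬝ᵥ w t + v t ⬝ᵥ w') t := by
  simp only [dotProduct, ← Finset.sum_add_distrib]
  exact HasDerivAt.fun_sum fun i _ => ((hv i).mul (hw i))

lemma hasDerivAt_mulVec {n m : Type*} [Fintype n] {M : ℝ → Matrix m n ℝ}
    {M' : Matrix m n ℝ} {w : ℝ → n → ℝ} {w' : n → ℝ} {t : ℝ}
    (hM : ∀ i j, HasDerivAt (fun s => M s i j) (M' i j) t)
    (hw : ∀ i, HasDerivAt (fun s => w s i) (w' i) t) (i : m) :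
    HasDerivAt (fun s => (M s).mulVec (w s) i)
      ((M'.mulVec (w t) + (M t).mulVec w') i) t := by
  simpa [Matrix.mulVec, dotProduct, ← Finset.sum_add_distrib] using
    HasDerivAt.fun_sum (fun j _ => ((hM i j).mul (hw j)))

lemma dot_symm_left {n : Type*} [Fintype n] {Em : Matrix n n ℝ} (hEm : Emᵀ = Em)
    (v w : n → ℝ) : v ⬝ᵥ Em.mulVec w = Em.mulVec v ⬝ᵥ w := by
  rw [Matrix.dotProduct_mulVec, ← Matrix.mulVec_transpose, hEm]

lemma key_identity (d d' : ℕ) (lam : ℝ) (hlam : lam ≠ 0)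
    (C : Matrix (Fin d') (Fin d) ℝ) (Am Em : Matrix (Fin d) (Fin d) ℝ) (hEm : Emᵀ = Em)
    (X R U H : Fin d → ℝ) (Z : Fin d' → ℝ) :
    (Am.mulVec X + R + U) ⬝ᵥ Em.mulVec X
    + X ⬝ᵥ ((Cᵀ * C - Amᵀ * Em - Em * Am - (1/lam) • (Em * Em)).mulVec X
        + Em.mulVec (Am.mulVec X + R + U))
    + 2 * ((-((Amᵀ + (1/lam) • Em).mulVec H) - (Cᵀ.mulVec Z + Em.mulVec R)) ⬝ᵥ X
        + H ⬝ᵥ (Am.mulVec X + R + U))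
    = evnorm (Z - C.mulVec X) ^ 2 + lam * evnorm U ^ 2
      - (evnorm Z ^ 2 - 2 * (R ⬝ᵥ H) - (1/lam) * evnorm H ^ 2)
      - lam * evnorm (U - (1/lam) • (Em.mulVec X + H)) ^ 2 := by
  have e1 : Am.mulVec X ⬝ᵥ Em.mulVec X = Em.mulVec X ⬝ᵥ Am.mulVec X := dotProduct_comm _ _
  have e2 : X ⬝ᵥ Amᵀ.mulVec (Em.mulVec X) = Em.mulVec X ⬝ᵥ Am.mulVec X :=
    dot_mulVec_transpose _ _ _
  have e3 : X ⬝ᵥ Cᵀ.mulVec (C.mulVec X) = C.mulVec X ⬝ᵥ C.mulVec X :=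
    dot_mulVec_transpose _ _ _
  have e4 : X ⬝ᵥ Em.mulVec (Em.mulVec X) = Em.mulVec X ⬝ᵥ Em.mulVec X := dot_symm_left hEm _ _
  have e5 : Em.mulVec H ⬝ᵥ X = H ⬝ᵥ Em.mulVec X := by
    rw [dotProduct_comm, dot_symm_left hEm, dotProduct_comm]
  have e6 : X ⬝ᵥ Em.mulVec R = R ⬝ᵥ Em.mulVec X := by
    rw [dot_symm_left hEm, dotProduct_comm]
  have e7 : X ⬝ᵥ Em.mulVec U = U ⬝ᵥ Em.mulVec X := by
    rw [dot_symm_left hEm, dotProduct_comm]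
  have e8 : Amᵀ.mulVec H ⬝ᵥ X = H ⬝ᵥ Am.mulVec X := by
    rw [dotProduct_comm]; exact dot_mulVec_transpose _ _ _
  have e9 : Cᵀ.mulVec Z ⬝ᵥ X = Z ⬝ᵥ C.mulVec X := by
    rw [dotProduct_comm]; exact dot_mulVec_transpose _ _ _
  have e10 : Em.mulVec R ⬝ᵥ X = R ⬝ᵥ Em.mulVec X := by
    rw [dotProduct_comm, dot_symm_left hEm, dotProduct_comm]
  have e11 : Em.mulVec X ⬝ᵥ U = U ⬝ᵥ Em.mulVec X := dotProduct_comm _ _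
  have e12 : Em.mulVec X ⬝ᵥ H = H ⬝ᵥ Em.mulVec X := dotProduct_comm _ _
  have e13 : U ⬝ᵥ H = H ⬝ᵥ U := dotProduct_comm _ _
  have e14 : C.mulVec X ⬝ᵥ Z = Z ⬝ᵥ C.mulVec X := dotProduct_comm _ _
  have e15 : R ⬝ᵥ H = H ⬝ᵥ R := dotProduct_comm _ _
  simp only [evnorm_sq, Matrix.add_mulVec, Matrix.sub_mulVec, Matrix.smul_mulVec,
    ← Matrix.mulVec_mulVec, Matrix.mulVec_add, Matrix.mulVec_smul, Matrix.neg_mulVec,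
    dotProduct_add, add_dotProduct, dotProduct_sub, sub_dotProduct, dotProduct_smul,
    smul_dotProduct, dotProduct_neg, neg_dotProduct, smul_eq_mul,
    e1, e2, e3, e4, e5, e6, e7, e8, e9, e10, e11, e12, e13, e14, e15]
  field_simp
  ring

lemma contOn_dot {n : Type*} [Fintype n] {v w : ℝ → n → ℝ} {s : Set ℝ}
    (hv : ∀ i, ContinuousOn (fun t => v t i) s) (hw : ∀ i, ContinuousOn (fun t => w t i) s) :
    ContinuousOn (fun t => v t ⬝ᵥ w t) s := by
  simp only [dotProduct]
  exact continuousOn_finset_sum _ fun i _ => (hv i).mul (hw i)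

lemma contOn_mulVec {m n : Type*} [Fintype n] {M : ℝ → Matrix m n ℝ} {w : ℝ → n → ℝ}
    {s : Set ℝ} (hM : ∀ i j, ContinuousOn (fun t => M t i j) s)
    (hw : ∀ j, ContinuousOn (fun t => w t j) s) (i : m) :
    ContinuousOn (fun t => (M t).mulVec (w t) i) s := by
  simp only [Matrix.mulVec, dotProduct]
  exact continuousOn_finset_sum _ fun j _ => (hM i j).mul (hw j)

set_option maxHeartbeats 1000000 in
/-- the cost of any admissible pair `(x₀, u)` is bounded below by the
closed-form value
`S = ∫₀ᵀ (‖ζ‖² − 2 rᵀh − (1/λ)‖h‖²) dt − h(T)ᵀ E(T)⁻¹ h(T)`. -/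
theorem statement12
    (d d' : ℕ) (hd : 1 ≤ d) (hd' : 1 ≤ d') (T : ℝ) (hT : 0 < T) (lam : ℝ) (hlam : 0 < lam)
    (C : Matrix (Fin d') (Fin d) ℝ)
    (A : ℝ → Matrix (Fin d) (Fin d) ℝ)
    (r : ℝ → Fin d → ℝ) (ζ : ℝ → Fin d' → ℝ)
    (hA : ∀ i j, ContinuousOn (fun t => A t i j) (Icc 0 T))
    (hr : ∀ i, ContinuousOn (fun t => r t i) (Icc 0 T))
    (hζ : ∀ i, ContinuousOn (fun t => ζ t i) (Icc 0 T))
    (Q : Matrix (Fin d) (Fin d) ℝ) (hQ : Q.PosSemidef)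
    (E : ℝ → Matrix (Fin d) (Fin d) ℝ)
    (hE0 : E 0 = Q)
    (hE : ∀ t ∈ Icc (0:ℝ) T, ∀ i j,
      HasDerivAt (fun s => E s i j)
        ((Cᵀ * C - (A t)ᵀ * E t - E t * A t - (1 / lam) • (E t * E t)) i j) t)
    (hEsymm : ∀ t ∈ Icc (0:ℝ) T, (E t)ᵀ = E t)
    (hET : (E T).PosDef)
    (h : ℝ → Fin d → ℝ)
    (hh0 : h 0 = 0)
    (hh : ∀ t ∈ Icc (0:ℝ) T, ∀ i,
      HasDerivAt (fun s => h s i)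
        ((-(((A t)ᵀ + (1 / lam) • E t).mulVec (h t))
          - (Cᵀ.mulVec (ζ t) + (E t).mulVec (r t))) i) t)
    (x₀ : Fin d → ℝ) (u : ℝ → Fin d → ℝ)
    (hu : ∀ i, ContinuousOn (fun t => u t i) (Icc 0 T))
    (x : ℝ → Fin d → ℝ)
    (hx0 : x 0 = x₀)
    (hx : ∀ t ∈ Icc (0:ℝ) T, ∀ i,
      HasDerivAt (fun s => x s i) (((A t).mulVec (x t) + r t + u t) i) t) :
    x₀ ⬝ᵥ Q.mulVec x₀
      + (∫ t in (0:ℝ)..T, evnorm (ζ t - C.mulVec (x t)) ^ 2)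
      + lam * ∫ t in (0:ℝ)..T, evnorm (u t) ^ 2
    ≥ (∫ t in (0:ℝ)..T,
        (evnorm (ζ t) ^ 2 - 2 * (r t ⬝ᵥ h t) - (1 / lam) * evnorm (h t) ^ 2))
      - h T ⬝ᵥ (E T)⁻¹.mulVec (h T) := by
  have huIcc : uIcc (0:ℝ) T = Icc 0 T := uIcc_of_le hT.le
  -- continuity of x, h, E
  have hxc : ∀ i, ContinuousOn (fun t => x t i) (Icc 0 T) :=
    fun i t ht => (hx t ht i).continuousAt.continuousWithinAt
  have hhc : ∀ i, ContinuousOn (fun t => h t i) (Icc 0 T) :=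
    fun i t ht => (hh t ht i).continuousAt.continuousWithinAt
  have hEc : ∀ i j, ContinuousOn (fun t => E t i j) (Icc 0 T) :=
    fun i j t ht => (hE t ht i j).continuousAt.continuousWithinAt
  -- continuity of integrands
  have c1e : ∀ i, ContinuousOn (fun t => (ζ t - C.mulVec (x t)) i) (Icc 0 T) := by
    intro i
    simp only [Pi.sub_apply]
    exact (hζ i).sub (contOn_mulVec (M := fun _ => C) (fun i j => continuousOn_const) hxc i)
  have c1 : ContinuousOn (fun t => evnorm (ζ t - C.mulVec (x t)) ^ 2) (Icc 0 T) := by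
    simp only [evnorm_sq]
    exact contOn_dot c1e c1e
  have c2 : ContinuousOn (fun t => evnorm (u t) ^ 2) (Icc 0 T) := by
    simp only [evnorm_sq]; exact contOn_dot hu hu
  have c3 : ContinuousOn
      (fun t => evnorm (ζ t) ^ 2 - 2 * (r t ⬝ᵥ h t) - (1 / lam) * evnorm (h t) ^ 2)
      (Icc 0 T) := by
    simp only [evnorm_sq]
    exact ((contOn_dot hζ hζ).sub (continuousOn_const.mul (contOn_dot hr hhc))).sub
      (continuousOn_const.mul (contOn_dot hhc hhc))
  have c4e : ∀ i, ContinuousOn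
      (fun t => (u t - (1 / lam) • ((E t).mulVec (x t) + h t)) i) (Icc 0 T) := by
    intro i
    simp only [Pi.sub_apply, Pi.smul_apply, Pi.add_apply, smul_eq_mul]
    exact (hu i).sub (continuousOn_const.mul ((contOn_mulVec hEc hxc i).add (hhc i)))
  have c4 : ContinuousOn
      (fun t => evnorm (u t - (1 / lam) • ((E t).mulVec (x t) + h t)) ^ 2) (Icc 0 T) := by
    simp only [evnorm_sq]; exact contOn_dot c4e c4e
  -- integrability
  have hi1 : IntervalIntegrable (fun t => evnorm (ζ t - C.mulVec (x t)) ^ 2)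
      MeasureTheory.volume 0 T := (huIcc ▸ c1).intervalIntegrable
  have hi2 : IntervalIntegrable (fun t => evnorm (u t) ^ 2) MeasureTheory.volume 0 T :=
    (huIcc ▸ c2).intervalIntegrable
  have hi3 : IntervalIntegrable
      (fun t => evnorm (ζ t) ^ 2 - 2 * (r t ⬝ᵥ h t) - (1 / lam) * evnorm (h t) ^ 2)
      MeasureTheory.volume 0 T := (huIcc ▸ c3).intervalIntegrable
  have hi4 : IntervalIntegrable
      (fun t => evnorm (u t - (1 / lam) • ((E t).mulVec (x t) + h t)) ^ 2)
      MeasureTheory.volume 0 T := (huIcc ▸ c4).intervalIntegrable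
  -- the derivative of the Lyapunov-like function
  have hF : ∀ t ∈ Icc (0:ℝ) T,
      HasDerivAt (fun s => x s ⬝ᵥ (E s).mulVec (x s) + 2 * (h s ⬝ᵥ x s))
        (evnorm (ζ t - C.mulVec (x t)) ^ 2 + lam * evnorm (u t) ^ 2
          - (evnorm (ζ t) ^ 2 - 2 * (r t ⬝ᵥ h t) - (1 / lam) * evnorm (h t) ^ 2)
          - lam * evnorm (u t - (1 / lam) • ((E t).mulVec (x t) + h t)) ^ 2) t := by
    intro t ht
    have hd := (hasDerivAt_dot (fun i => hx t ht i)
        (hasDerivAt_mulVec (hE t ht) (fun i => hx t ht i))).add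
      ((hasDerivAt_dot (fun i => hh t ht i) (fun i => hx t ht i)).const_mul 2)
    have hkey := key_identity d d' lam hlam.ne' C (A t) (E t) (hEsymm t ht)
      (x t) (r t) (u t) (h t) (ζ t)
    rw [← hkey]
    exact hd
  -- FTC
  have hFTC : (∫ t in (0:ℝ)..T,
      (evnorm (ζ t - C.mulVec (x t)) ^ 2 + lam * evnorm (u t) ^ 2
        - (evnorm (ζ t) ^ 2 - 2 * (r t ⬝ᵥ h t) - (1 / lam) * evnorm (h t) ^ 2)
        - lam * evnorm (u t - (1 / lam) • ((E t).mulVec (x t) + h t)) ^ 2))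
      = (x T ⬝ᵥ (E T).mulVec (x T) + 2 * (h T ⬝ᵥ x T))
        - (x 0 ⬝ᵥ (E 0).mulVec (x 0) + 2 * (h 0 ⬝ᵥ x 0)) := by
    refine integral_eq_sub_of_hasDerivAt (fun t ht => hF t (huIcc ▸ ht)) ?_
    apply ContinuousOn.intervalIntegrable
    rw [huIcc]
    exact ((c1.add (continuousOn_const.mul c2)).sub c3).sub (continuousOn_const.mul c4)
  -- split the integral
  have hsplit : (∫ t in (0:ℝ)..T, evnorm (ζ t - C.mulVec (x t)) ^ 2)
      + lam * (∫ t in (0:ℝ)..T, evnorm (u t) ^ 2)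
      - (∫ t in (0:ℝ)..T,
          (evnorm (ζ t) ^ 2 - 2 * (r t ⬝ᵥ h t) - (1 / lam) * evnorm (h t) ^ 2))
      - lam * (∫ t in (0:ℝ)..T,
          evnorm (u t - (1 / lam) • ((E t).mulVec (x t) + h t)) ^ 2)
      = (x T ⬝ᵥ (E T).mulVec (x T) + 2 * (h T ⬝ᵥ x T))
        - (x 0 ⬝ᵥ (E 0).mulVec (x 0) + 2 * (h 0 ⬝ᵥ x 0)) := by
    rw [← integral_const_mul, ← integral_const_mul, ← integral_add hi1 (hi2.const_mul lam),
      ← integral_sub (hi1.add (hi2.const_mul lam)) hi3,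
      ← integral_sub ((hi1.add (hi2.const_mul lam)).sub hi3) (hi4.const_mul lam)]
    exact hFTC
  -- value at 0
  have hF0 : x 0 ⬝ᵥ (E 0).mulVec (x 0) + 2 * (h 0 ⬝ᵥ x 0) = x₀ ⬝ᵥ Q.mulVec x₀ := by
    rw [hx0, hE0, hh0]; simp
  -- the fourth integral is nonnegative
  have hI4 : 0 ≤ ∫ t in (0:ℝ)..T,
      evnorm (u t - (1 / lam) • ((E t).mulVec (x t) + h t)) ^ 2 :=
    integral_nonneg hT.le fun t _ => sq_nonneg _
  -- terminal bound
  have hTmem : T ∈ Icc (0:ℝ) T := ⟨hT.le, le_refl T⟩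
  have hsym := hEsymm T hTmem
  have hdet : IsUnit (E T).det := hET.det_pos.ne'.isUnit
  have hinv : (E T).mulVec ((E T)⁻¹.mulVec (h T)) = h T := by
    rw [Matrix.mulVec_mulVec, Matrix.mul_nonsing_inv _ hdet, Matrix.one_mulVec]
  have hpos : 0 ≤ (x T + (E T)⁻¹.mulVec (h T)) ⬝ᵥ
      (E T).mulVec (x T + (E T)⁻¹.mulVec (h T)) := by
    have := hET.posSemidef.dotProduct_mulVec_nonneg (x T + (E T)⁻¹.mulVec (h T))
    simpa using this
  have hexp : (x T + (E T)⁻¹.mulVec (h T)) ⬝ᵥ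
      (E T).mulVec (x T + (E T)⁻¹.mulVec (h T))
      = x T ⬝ᵥ (E T).mulVec (x T) + 2 * (h T ⬝ᵥ x T)
        + h T ⬝ᵥ (E T)⁻¹.mulVec (h T) := by
    rw [Matrix.mulVec_add, hinv]
    simp only [dotProduct_add, add_dotProduct]
    rw [dot_symm_left hsym ((E T)⁻¹.mulVec (h T)) (x T), hinv,
      dotProduct_comm (x T) (h T), dotProduct_comm ((E T)⁻¹.mulVec (h T)) (h T)]
    ring
  linarith [mul_nonneg hlam.le hI4]
end
end

section
/- For every z₀ ∈ ℝ^d, every continuous control u : [t₀,T] → ℝ^d and every differentiable z : [t₀,T] → ℝ^d with z(t₀) = z₀ and z'(t) = A(t)z(t) + B(t)u(t) for all t, the quadratic cost satisfies z(T)ᵀQz(T) + ∫_{t₀}^{T} (z(t)ᵀW(t)z(t) + u(t)ᵀU(t)u(t)) dt ≥ −z₀ᵀ E(t₀) z₀, with equality if and only if u(t) = U(t)⁻¹ B(t)ᵀ E(t) z(t) for all t ∈ [t₀,T]. -/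
open Matrix Set intervalIntegral
open scoped Matrix

noncomputable section

lemma dpmv {d : ℕ} (M : Matrix (Fin d) (Fin d) ℝ) (x y : Fin d → ℝ) :
    (M *ᵥ x) ⬝ᵥ y = x ⬝ᵥ (Mᵀ *ᵥ y) := by
  rw [Matrix.dotProduct_mulVec, Matrix.vecMul_transpose]

lemma dpmv2 {d : ℕ} (M : Matrix (Fin d) (Fin d) ℝ) (x y : Fin d → ℝ) :
    x ⬝ᵥ (M *ᵥ y) = (Mᵀ *ᵥ x) ⬝ᵥ y := by
  rw [dpmv, Matrix.transpose_transpose]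

lemma quad_deriv {d : ℕ} (E : ℝ → Matrix (Fin d) (Fin d) ℝ) (z : ℝ → Fin d → ℝ)
    (E' : Matrix (Fin d) (Fin d) ℝ) (z' : Fin d → ℝ) (t : ℝ)
    (hE : ∀ i j, HasDerivAt (fun s => E s i j) (E' i j) t)
    (hz : ∀ i, HasDerivAt (fun s => z s i) (z' i) t) :
    HasDerivAt (fun s => z s ⬝ᵥ (E s).mulVec (z s))
      (z' ⬝ᵥ (E t).mulVec (z t) + z t ⬝ᵥ E'.mulVec (z t) + z t ⬝ᵥ (E t).mulVec z') t := by
  have h : ∀ i : Fin d, HasDerivAt (fun s => ∑ j, E s i j * z s j)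
      (∑ j, (E' i j * z t j + E t i j * z' j)) t :=
    fun i => HasDerivAt.fun_sum fun j _ => (hE i j).mul (hz j)
  have h2 : HasDerivAt (fun s => ∑ i, z s i * ∑ j, E s i j * z s j)
      (∑ i, (z' i * ∑ j, E t i j * z t j +
        z t i * ∑ j, (E' i j * z t j + E t i j * z' j))) t :=
    HasDerivAt.fun_sum fun i _ => (hz i).mul (h i)
  have hfun : (fun s => z s ⬝ᵥ (E s).mulVec (z s))
      = fun s => ∑ i, z s i * ∑ j, E s i j * z s j := by
    funext s
    simp [dotProduct, Matrix.mulVec]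
  rw [hfun]
  convert h2 using 1
  simp [dotProduct, Matrix.mulVec, Finset.sum_add_distrib, Finset.mul_sum, mul_add]
  ring

lemma key_alg {d : ℕ} (Am Bm Wm Um Em : Matrix (Fin d) (Fin d) ℝ)
    (hEs : Emᵀ = Em) (hUp : Um.PosDef) (a b : Fin d → ℝ) :
    (Am *ᵥ a + Bm *ᵥ b) ⬝ᵥ (Em *ᵥ a)
      + a ⬝ᵥ ((Wm - Amᵀ * Em - Em * Am - Em * Bm * Um⁻¹ * Bmᵀ * Em) *ᵥ a)
      + a ⬝ᵥ (Em *ᵥ (Am *ᵥ a + Bm *ᵥ b))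
    = a ⬝ᵥ (Wm *ᵥ a) + b ⬝ᵥ (Um *ᵥ b)
      - (b - Um⁻¹ *ᵥ (Bmᵀ *ᵥ (Em *ᵥ a))) ⬝ᵥ (Um *ᵥ (b - Um⁻¹ *ᵥ (Bmᵀ *ᵥ (Em *ᵥ a)))) := by
  have hUs : Umᵀ = Um := by
    have := hUp.isHermitian
    simpa [Matrix.IsHermitian, Matrix.conjTranspose_eq_transpose_of_trivial] using this
  have hUinv : Um * Um⁻¹ = 1 := Matrix.mul_nonsing_inv Um hUp.det_pos.ne'.isUnit
  have hUis : Um⁻¹ᵀ = Um⁻¹ := by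
    rw [Matrix.transpose_nonsing_inv, hUs]
  set w : Fin d → ℝ := Bmᵀ *ᵥ (Em *ᵥ a) with hw
  set v : Fin d → ℝ := Um⁻¹ *ᵥ w with hv
  have c6 : Um *ᵥ v = w := by
    rw [hv, Matrix.mulVec_mulVec, hUinv, Matrix.one_mulVec]
  have c1 : (Am *ᵥ a) ⬝ᵥ (Em *ᵥ a) = a ⬝ᵥ ((Amᵀ * Em) *ᵥ a) := by
    rw [dpmv, Matrix.mulVec_mulVec]
  have c2 : (Bm *ᵥ b) ⬝ᵥ (Em *ᵥ a) = b ⬝ᵥ w := by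
    rw [dpmv, hw, Matrix.mulVec_mulVec]
  have c3 : a ⬝ᵥ (Em *ᵥ (Am *ᵥ a)) = a ⬝ᵥ ((Em * Am) *ᵥ a) := by
    rw [Matrix.mulVec_mulVec]
  have c4 : a ⬝ᵥ (Em *ᵥ (Bm *ᵥ b)) = b ⬝ᵥ w := by
    rw [dpmv2, hEs, dotProduct_comm, c2]
  have c5 : a ⬝ᵥ ((Em * Bm * Um⁻¹ * Bmᵀ * Em) *ᵥ a) = w ⬝ᵥ (Um⁻¹ *ᵥ w) := by
    have hexp : (Em * Bm * Um⁻¹ * Bmᵀ * Em) *ᵥ a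
        = Em *ᵥ (Bm *ᵥ (Um⁻¹ *ᵥ (Bmᵀ *ᵥ (Em *ᵥ a)))) := by
      simp [Matrix.mulVec_mulVec, Matrix.mul_assoc]
    rw [hexp, dpmv2, hEs, dpmv2, hw]
  have c7 : v ⬝ᵥ (Um *ᵥ b) = b ⬝ᵥ w := by
    rw [dpmv2, hUs, c6, dotProduct_comm]
  have c8 : v ⬝ᵥ (Um *ᵥ v) = w ⬝ᵥ (Um⁻¹ *ᵥ w) := by
    rw [c6, hv, dpmv, hUis]
  have c9 : b ⬝ᵥ (Um *ᵥ v) = b ⬝ᵥ w := by rw [c6]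
  simp only [Matrix.sub_mulVec, Matrix.mulVec_sub, Matrix.mulVec_add, Matrix.add_mulVec,
    dotProduct_sub, sub_dotProduct, dotProduct_add, add_dotProduct]
  rw [c1, c2, c3, c4, c5, c7, c8, c9]
  ring

lemma contOn_mulVec_s15 {d : ℕ} {s : Set ℝ} {M : ℝ → Matrix (Fin d) (Fin d) ℝ} {x : ℝ → Fin d → ℝ}
    (hM : ∀ i j, ContinuousOn (fun t => M t i j) s) (hx : ∀ i, ContinuousOn (fun t => x t i) s)
    (i : Fin d) : ContinuousOn (fun t => (M t *ᵥ x t) i) s := by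
  simp only [Matrix.mulVec, dotProduct]
  exact continuousOn_finset_sum _ fun j _ => (hM i j).mul (hx j)

lemma contOn_dot_s15 {d : ℕ} {s : Set ℝ} {x y : ℝ → Fin d → ℝ}
    (hx : ∀ i, ContinuousOn (fun t => x t i) s) (hy : ∀ i, ContinuousOn (fun t => y t i) s) :
    ContinuousOn (fun t => x t ⬝ᵥ y t) s := by
  simp only [dotProduct]
  exact continuousOn_finset_sum _ fun i _ => (hx i).mul (hy i)

theorem statement15
    (d : ℕ) (hd : 1 ≤ d) (t₀ T : ℝ) (ht : t₀ < T)
    (A B W U : ℝ → Matrix (Fin d) (Fin d) ℝ)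
    (hA : ∀ i j, ContinuousOn (fun t => A t i j) (Icc t₀ T))
    (hB : ∀ i j, ContinuousOn (fun t => B t i j) (Icc t₀ T))
    (hW : ∀ i j, ContinuousOn (fun t => W t i j) (Icc t₀ T))
    (hU : ∀ i j, ContinuousOn (fun t => U t i j) (Icc t₀ T))
    (hWpos : ∀ t ∈ Icc t₀ T, (W t).PosSemidef)
    (hUpos : ∀ t ∈ Icc t₀ T, (U t).PosDef)
    (Q : Matrix (Fin d) (Fin d) ℝ) (hQ : Q.PosSemidef)
    (E : ℝ → Matrix (Fin d) (Fin d) ℝ)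
    (hET : E T = -Q)
    (hEsymm : ∀ t ∈ Icc t₀ T, (E t)ᵀ = E t)
    (hE : ∀ t ∈ Icc t₀ T, ∀ i j,
      HasDerivAt (fun s => E s i j)
        ((W t - (A t)ᵀ * E t - E t * A t - E t * B t * (U t)⁻¹ * (B t)ᵀ * E t) i j) t)
    (z₀ : Fin d → ℝ) (u : ℝ → Fin d → ℝ)
    (hu : ∀ i, ContinuousOn (fun t => u t i) (Icc t₀ T))
    (z : ℝ → Fin d → ℝ)
    (hz0 : z t₀ = z₀)
    (hz : ∀ t ∈ Icc t₀ T, ∀ i,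
      HasDerivAt (fun s => z s i) (((A t).mulVec (z t) + (B t).mulVec (u t)) i) t) :
    (z T ⬝ᵥ Q.mulVec (z T)
        + ∫ t in t₀..T, (z t ⬝ᵥ (W t).mulVec (z t) + u t ⬝ᵥ (U t).mulVec (u t))
      ≥ -(z₀ ⬝ᵥ (E t₀).mulVec z₀))
    ∧ (z T ⬝ᵥ Q.mulVec (z T)
          + ∫ t in t₀..T, (z t ⬝ᵥ (W t).mulVec (z t) + u t ⬝ᵥ (U t).mulVec (u t))
        = -(z₀ ⬝ᵥ (E t₀).mulVec z₀)
      ↔ ∀ t ∈ Icc t₀ T, u t = (U t)⁻¹.mulVec ((B t)ᵀ.mulVec ((E t).mulVec (z t)))) := by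
  have hIcc : uIcc t₀ T = Icc t₀ T := uIcc_of_le ht.le
  set v : ℝ → Fin d → ℝ := fun t => (U t)⁻¹ *ᵥ ((B t)ᵀ *ᵥ ((E t) *ᵥ (z t))) with hvdef
  set f : ℝ → ℝ := fun t => (u t - v t) ⬝ᵥ ((U t) *ᵥ (u t - v t)) with hfdef
  -- continuity facts
  have hzc : ∀ i, ContinuousOn (fun t => z t i) (Icc t₀ T) :=
    fun i t htmem => (hz t htmem i).continuousAt.continuousWithinAt
  have hEc : ∀ i j, ContinuousOn (fun t => E t i j) (Icc t₀ T) :=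
    fun i j t htmem => (hE t htmem i j).continuousAt.continuousWithinAt
  have hUmat : ContinuousOn U (Icc t₀ T) :=
    continuousOn_pi.2 fun i => continuousOn_pi.2 fun j => hU i j
  have hdetU : ContinuousOn (fun t => (U t).det) (Icc t₀ T) :=
    (continuous_id.matrix_det).comp_continuousOn hUmat
  have hUinvc : ∀ i j, ContinuousOn (fun t => (U t)⁻¹ i j) (Icc t₀ T) := by
    intro i j
    have hadj : ContinuousOn (fun t => (U t).adjugate i j) (Icc t₀ T) :=
      ((continuous_apply j).comp ((continuous_apply i).comp
        continuous_id.matrix_adjugate)).comp_continuousOn hUmat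
    have hne : ∀ t ∈ Icc t₀ T, (U t).det ≠ 0 := fun t htmem => (hUpos t htmem).det_pos.ne'
    refine ((hdetU.inv₀ hne).mul hadj).congr fun t htmem => ?_
    rw [Matrix.inv_def, Ring.inverse_eq_inv', Matrix.smul_apply, smul_eq_mul]; rfl
  have hvc : ∀ i, ContinuousOn (fun t => v t i) (Icc t₀ T) :=
    contOn_mulVec_s15 hUinvc
      (contOn_mulVec_s15 (fun i j => hB j i) (contOn_mulVec_s15 hEc hzc))
  have hrc : ∀ i, ContinuousOn (fun t => (u t - v t) i) (Icc t₀ T) :=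
    fun i => (hu i).sub (hvc i)
  have hfc : ContinuousOn f (Icc t₀ T) := contOn_dot_s15 hrc (contOn_mulVec_s15 hU hrc)
  have hgc : ContinuousOn
      (fun t => z t ⬝ᵥ (W t).mulVec (z t) + u t ⬝ᵥ (U t).mulVec (u t)) (Icc t₀ T) :=
    (contOn_dot_s15 hzc (contOn_mulVec_s15 hW hzc)).add (contOn_dot_s15 hu (contOn_mulVec_s15 hU hu))
  have hf_int : IntervalIntegrable f MeasureTheory.volume t₀ T :=
    (hIcc ▸ hfc).intervalIntegrable
  have hg_int : IntervalIntegrable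
      (fun t => z t ⬝ᵥ (W t).mulVec (z t) + u t ⬝ᵥ (U t).mulVec (u t))
      MeasureTheory.volume t₀ T := (hIcc ▸ hgc).intervalIntegrable
  -- derivative of the quadratic function φ
  have hderiv : ∀ t ∈ uIcc t₀ T, HasDerivAt (fun s => z s ⬝ᵥ (E s).mulVec (z s))
      ((z t ⬝ᵥ (W t).mulVec (z t) + u t ⬝ᵥ (U t).mulVec (u t)) - f t) t := by
    rw [hIcc]
    intro t htmem
    have h := quad_deriv E z
      (W t - (A t)ᵀ * E t - E t * A t - E t * B t * (U t)⁻¹ * (B t)ᵀ * E t)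
      ((A t).mulVec (z t) + (B t).mulVec (u t)) t (hE t htmem) (hz t htmem)
    have halg := key_alg (A t) (B t) (W t) (U t) (E t)
      (hEsymm t htmem) (hUpos t htmem) (z t) (u t)
    rw [halg] at h
    exact h
  have hFTC : ∫ t in t₀..T,
      ((z t ⬝ᵥ (W t).mulVec (z t) + u t ⬝ᵥ (U t).mulVec (u t)) - f t)
      = z T ⬝ᵥ (E T).mulVec (z T) - z t₀ ⬝ᵥ (E t₀).mulVec (z t₀) :=
    integral_eq_sub_of_hasDerivAt hderiv (hg_int.sub hf_int)
  rw [integral_sub hg_int hf_int] at hFTC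
  have hphiT : z T ⬝ᵥ (E T).mulVec (z T) = -(z T ⬝ᵥ Q.mulVec (z T)) := by
    rw [hET, Matrix.neg_mulVec, dotProduct_neg]
  rw [hphiT, hz0] at hFTC
  have hnonneg : ∀ t ∈ Icc t₀ T, 0 ≤ f t := by
    intro t htmem
    simpa only [star_trivial] using (hUpos t htmem).posSemidef.dotProduct_mulVec_nonneg (u t - v t)
  have hint_nonneg : 0 ≤ ∫ t in t₀..T, f t :=
    integral_nonneg ht.le hnonneg
  have hcost : z T ⬝ᵥ Q.mulVec (z T)
      + ∫ t in t₀..T, (z t ⬝ᵥ (W t).mulVec (z t) + u t ⬝ᵥ (U t).mulVec (u t))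
      = -(z₀ ⬝ᵥ (E t₀).mulVec z₀) + ∫ t in t₀..T, f t := by linarith
  constructor
  · rw [hcost]; linarith
  constructor
  · -- equality implies optimal control
    intro heq
    have hintf0 : ∫ t in t₀..T, f t = 0 := by linarith
    have hf0 : ∀ s ∈ Icc t₀ T, f s = 0 := by
      by_contra hcon
      push_neg at hcon
      obtain ⟨c, hc, hcne⟩ := hcon
      have hcpos : 0 < f c := lt_of_le_of_ne (hnonneg c hc) (Ne.symm hcne)
      have hae : 0 ≤ᵐ[MeasureTheory.volume.restrict (Set.uIoc t₀ T)] f := by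
        rw [uIoc_of_le ht.le]
        exact (MeasureTheory.ae_restrict_mem measurableSet_Ioc).mono
          fun x hx => hnonneg x ⟨le_of_lt hx.1, hx.2⟩
      have hnb : f ⁻¹' Ioi (0 : ℝ) ∈ nhdsWithin c (Icc t₀ T) :=
        (hfc c hc) (isOpen_Ioi.mem_nhds hcpos)
      obtain ⟨δ, hδ, hball⟩ := Metric.mem_nhdsWithin_iff.1 hnb
      obtain ⟨hc1, hc2⟩ := hc
      have hab : max t₀ (c - δ) < min T (c + δ) := by
        rw [max_lt_iff, lt_min_iff, lt_min_iff]
        exact ⟨⟨ht, by linarith⟩, ⟨by linarith, by linarith⟩⟩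
      have hsub : Ioo (max t₀ (c - δ)) (min T (c + δ))
          ⊆ Function.support f ∩ Ioc t₀ T := by
        intro x hx
        obtain ⟨hx1, hx2⟩ := hx
        have hxt₀ : t₀ < x := lt_of_le_of_lt (le_max_left _ _) hx1
        have hxT : x ≤ T := le_of_lt (lt_of_lt_of_le hx2 (min_le_left _ _))
        have hxb : x ∈ Metric.ball c δ := by
          rw [Metric.mem_ball, Real.dist_eq, abs_lt]
          constructor
          · have := lt_of_le_of_lt (le_max_right t₀ (c - δ)) hx1; linarith
          · have := lt_of_lt_of_le hx2 (min_le_right T (c + δ)); linarith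
        have hfx : f x ∈ Ioi (0 : ℝ) := hball ⟨hxb, ⟨le_of_lt hxt₀, hxT⟩⟩
        exact ⟨Function.mem_support.2 hfx.ne', ⟨hxt₀, hxT⟩⟩
      have hμ : 0 < MeasureTheory.volume (Function.support f ∩ Ioc t₀ T) := by
        refine lt_of_lt_of_le ?_ (MeasureTheory.measure_mono hsub)
        rw [Real.volume_Ioo]
        exact ENNReal.ofReal_pos.2 (sub_pos.2 hab)
      have hpos : 0 < ∫ t in t₀..T, f t :=
        (integral_pos_iff_support_of_nonneg_ae' hae hf_int).2 ⟨ht, hμ⟩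
      linarith
    intro t htmem
    have hft : f t = 0 := hf0 t htmem
    by_contra hne
    have hrne : u t - v t ≠ 0 := sub_ne_zero.2 hne
    have := (hUpos t htmem).dotProduct_mulVec_pos (x := u t - v t) (by simpa using hrne)
    rw [hfdef] at hft
    simp only [star_trivial] at this
    simp only at hft
    linarith
  · -- optimal control implies equality
    intro hctrl
    have hfz : EqOn f 0 (uIcc t₀ T) := by
      rw [hIcc]
      intro t htmem
      have : u t - v t = 0 := by rw [hctrl t htmem]; simp [hvdef]
      simp [hfdef, this]
    have : ∫ t in t₀..T, f t = 0 := by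
      rw [integral_congr hfz]
      simp
    rw [hcost, this, add_zero]
end
end
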